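/- Let f ∈ L²((0,T),ℝ^m) admit a representative of the form f(t) = c + ∫_0^t g(s) ds for a.e. t ∈ (0,T), for some c ∈ ℝ^m and g ∈ L²((0,T),ℝ^m) (i.e. f ∈ W^{1,2}((0,T),ℝ^m)). Then the convolution functional F : Θ → ℝ, F(t,ω) := ∫_0^t ⟨f(r), ω(t−r)⟩ dr, is d_B-continuous: F(θ_n) → F(θ) whenever d_B(θ_n,θ) → 0. -/

import Mathlib

noncomputable section

open MeasureTheory Filter

/-- `ℝ^m` with the Euclidean norm. -/
abbrev Em (m : ℕ) : Type := EuclideanSpace ℝ (Fin m)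

/-- The path space `Ω`. -/
abbrev PathSp (m : ℕ) (T : ℝ) : Type :=
  {ω : C(Set.Icc (0:ℝ) T, Em m) // ∀ s : Set.Icc (0:ℝ) T, (s : ℝ) = 0 → ω s = 0}

/-- `Θ = [0,T] × Ω`. -/
abbrev ThetaSp (m : ℕ) (T : ℝ) : Type := Set.Icc (0:ℝ) T × PathSp m T

/-- Evaluation of a path at an arbitrary real time, extended by `0` outside `[0,T]`. -/
def ev {m : ℕ} {T : ℝ} (ω : PathSp m T) (r : ℝ) : Em m :=
  if h : r ∈ Set.Icc (0:ℝ) T then ω.val ⟨r, h⟩ else 0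

/-- The pseudometric `d_B` on `Θ`:
`d_B((t,ω),(t',ω')) = |t−t'| + |ω(t)−ω'(t')| + |∫_0^t ω − ∫_0^{t'} ω'|
  + (∫_0^T |∫_{(t−ρ)∨0}^t ω − ∫_{(t'−ρ)∨0}^{t'} ω'|² dρ)^{1/2}`. -/
def dBmetric {m : ℕ} {T : ℝ} (θ θ' : ThetaSp m T) : ℝ :=
  |(θ.1 : ℝ) - (θ'.1 : ℝ)| + ‖ev θ.2 (θ.1 : ℝ) - ev θ'.2 (θ'.1 : ℝ)‖ +
    ‖(∫ r in (0:ℝ)..(θ.1 : ℝ), ev θ.2 r) - ∫ r in (0:ℝ)..(θ'.1 : ℝ), ev θ'.2 r‖ +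
    Real.sqrt (∫ ρ in (0:ℝ)..T,
      ‖(∫ r in (max ((θ.1 : ℝ) - ρ) 0)..(θ.1 : ℝ), ev θ.2 r) -
        ∫ r in (max ((θ'.1 : ℝ) - ρ) 0)..(θ'.1 : ℝ), ev θ'.2 r‖ ^ 2)

/-- The convolution functional `F(t,ω) = ∫_0^t ⟨f(r), ω(t−r)⟩ dr`. -/
def convF {m : ℕ} {T : ℝ} (f : ℝ → Em m) (θ : ThetaSp m T) : ℝ :=
  ∫ r in (0:ℝ)..(θ.1 : ℝ), (inner ℝ (f r) (ev θ.2 ((θ.1 : ℝ) - r)) : ℝ)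

namespace Stmt15Aux

variable {m : ℕ} {T : ℝ}

lemma ev_eq (hT : 0 ≤ T) (ω : PathSp m T) :
    ev ω = (Set.Icc (0:ℝ) T).indicator (fun r => ω.val (Set.projIcc 0 T hT r)) := by
  funext r
  by_cases h : r ∈ Set.Icc (0:ℝ) T
  · simp [ev, h, Set.indicator_of_mem, Set.projIcc_of_mem hT h]
  · simp [ev, h]

lemma ev_sm (hT : 0 ≤ T) (ω : PathSp m T) : StronglyMeasurable (ev ω) := by
  rw [ev_eq hT]
  exact ((ω.val.continuous.comp continuous_projIcc).stronglyMeasurable).indicator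
    measurableSet_Icc

lemma ev_norm_le (ω : PathSp m T) (r : ℝ) : ‖ev ω r‖ ≤ ‖ω.val‖ := by
  unfold ev; split
  · exact ω.val.norm_coe_le_norm _
  · simpa using norm_nonneg ω.val

lemma ev_integrable (hT : 0 ≤ T) (ω : PathSp m T) : Integrable (ev ω) volume := by
  rw [ev_eq hT]
  rw [integrable_indicator_iff measurableSet_Icc]
  exact (ω.val.continuous.comp continuous_projIcc).integrableOn_Icc

lemma ev_ii (hT : 0 ≤ T) (ω : PathSp m T) (a b : ℝ) :
    IntervalIntegrable (ev ω) volume a b :=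
  (ev_integrable hT ω).intervalIntegrable

def Iv (θ : ThetaSp m T) : Em m := ∫ r in (0:ℝ)..(θ.1:ℝ), ev θ.2 r

def Hv (θ : ThetaSp m T) (s : ℝ) : Em m :=
  ∫ r in (max ((θ.1:ℝ) - s) 0)..(θ.1:ℝ), ev θ.2 r

lemma Hv_continuous (hT : 0 ≤ T) (θ : ThetaSp m T) : Continuous (Hv θ) := by
  have h1 : Continuous (fun x : ℝ => ∫ r in x..(θ.1:ℝ), ev θ.2 r) := by
    have := intervalIntegral.continuous_primitive (fun a b => ev_ii hT θ.2 a b) (θ.1:ℝ)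
    have heq : (fun x : ℝ => ∫ r in x..(θ.1:ℝ), ev θ.2 r)
        = fun x : ℝ => -∫ r in (θ.1:ℝ)..x, ev θ.2 r := by
      funext x; rw [intervalIntegral.integral_symm]
    rw [heq]; exact this.neg
  exact h1.comp ((continuous_const.sub continuous_id).max continuous_const)

lemma Iv_norm_le (hT : 0 ≤ T) (θ : ThetaSp m T) : ‖Iv θ‖ ≤ ‖θ.2.val‖ * T := by
  have h0 : (0:ℝ) ≤ (θ.1:ℝ) := θ.1.2.1
  have h1 : (θ.1:ℝ) ≤ T := θ.1.2.2
  calc ‖Iv θ‖ ≤ ‖θ.2.val‖ * |(θ.1:ℝ) - 0| :=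
        intervalIntegral.norm_integral_le_of_norm_le_const (fun x _ => ev_norm_le θ.2 x)
    _ ≤ ‖θ.2.val‖ * T := by
        rw [sub_zero, abs_of_nonneg h0]
        exact mul_le_mul_of_nonneg_left h1 (norm_nonneg _)

lemma Hv_norm_le (hT : 0 ≤ T) (θ : ThetaSp m T) {s : ℝ} (hs : 0 ≤ s) :
    ‖Hv θ s‖ ≤ ‖θ.2.val‖ * T := by
  have h0 : (0:ℝ) ≤ (θ.1:ℝ) := θ.1.2.1
  have h1 : (θ.1:ℝ) ≤ T := θ.1.2.2
  calc ‖Hv θ s‖ ≤ ‖θ.2.val‖ * |(θ.1:ℝ) - max ((θ.1:ℝ) - s) 0| :=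
        intervalIntegral.norm_integral_le_of_norm_le_const (fun x _ => ev_norm_le θ.2 x)
    _ ≤ ‖θ.2.val‖ * T := by
        refine mul_le_mul_of_nonneg_left ?_ (norm_nonneg _)
        have hmax0 : (0:ℝ) ≤ max ((θ.1:ℝ) - s) 0 := le_max_right _ _
        have hmaxt : max ((θ.1:ℝ) - s) 0 ≤ (θ.1:ℝ) := max_le (by linarith) h0
        rw [abs_of_nonneg (by linarith)]
        linarith

end Stmt15Aux


namespace Stmt15Aux

variable {m : ℕ} {T : ℝ}

lemma ii_of_bdd {E : Type*} [NormedAddCommGroup E] {u : ℝ → E}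
    (hu : AEStronglyMeasurable u volume) {C : ℝ}
    (hb : ∀ r, ‖u r‖ ≤ C) (a b : ℝ) : IntervalIntegrable u volume a b := by
  rw [intervalIntegrable_iff]
  refine Integrable.mono' (g := fun _ => C) ?_ hu.restrict (ae_of_all _ hb)
  refine integrableOn_const ?_
  rw [Set.uIoc]; exact measure_Ioc_lt_top.ne

/-- integrability of the main integrand -/
lemma integrand_int (hT : 0 ≤ T) {g : ℝ → Em m}
    (hgi : IntegrableOn g (Set.Ioc 0 T)) (θ : ThetaSp m T) {a b : ℝ}
    (hab : Set.Ioc a b ⊆ Set.Ioc 0 T) :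
    IntegrableOn (fun s => (inner ℝ (g s) (Iv θ - Hv θ s) : ℝ)) (Set.Ioc a b) := by
  have hgi' : IntegrableOn g (Set.Ioc a b) := hgi.mono_set hab
  have hcont : Continuous (fun s => Iv θ - Hv θ s) :=
    continuous_const.sub (Hv_continuous hT θ)
  refine Integrable.mono' (g := fun s => ‖g s‖ * (‖θ.2.val‖ * T + ‖θ.2.val‖ * T))
    (hgi'.norm.mul_const _) (hgi'.aestronglyMeasurable.inner
      (hcont.aestronglyMeasurable.restrict)) ?_
  rw [ae_restrict_iff' measurableSet_Ioc]
  refine ae_of_all _ fun s hs => ?_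
  have hs0 : 0 ≤ s := le_of_lt (hab hs).1
  calc ‖(inner ℝ (g s) (Iv θ - Hv θ s) : ℝ)‖ ≤ ‖g s‖ * ‖Iv θ - Hv θ s‖ := norm_inner_le_norm _ _
    _ ≤ ‖g s‖ * (‖θ.2.val‖ * T + ‖θ.2.val‖ * T) := by
        refine mul_le_mul_of_nonneg_left ?_ (norm_nonneg _)
        exact (norm_sub_le _ _).trans (add_le_add (Iv_norm_le hT θ) (Hv_norm_le hT θ hs0))

lemma rep (hT : 0 < T) (f : ℝ → Em m) (c : Em m) (g : ℝ → Em m)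
    (hgm : StronglyMeasurable g) (hgi : IntegrableOn g (Set.Ioc 0 T))
    (hfg : ∀ᵐ t ∂(volume.restrict (Set.Ioo (0:ℝ) T)), f t = c + ∫ s in (0:ℝ)..t, g s)
    (θ : ThetaSp m T) :
    convF f θ = (inner ℝ c (Iv θ) : ℝ) +
      ∫ s in Set.Ioc (0:ℝ) T, (inner ℝ (g s) (Iv θ - Hv θ s) : ℝ) := by
  have ht0 : (0:ℝ) ≤ (θ.1:ℝ) := θ.1.2.1
  have htT : (θ.1:ℝ) ≤ T := θ.1.2.2
  set t : ℝ := (θ.1 : ℝ) with htdef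
  set v : ℝ → Em m := fun r => ev θ.2 (t - r) with hvdef
  set C : ℝ := ‖θ.2.val‖ with hCdef
  have hC0 : 0 ≤ C := norm_nonneg _
  have hvsm : StronglyMeasurable v :=
    (ev_sm hT.le θ.2).comp_measurable (measurable_const.sub measurable_id)
  have hvb : ∀ r, ‖v r‖ ≤ C := fun r => ev_norm_le θ.2 _
  have hvii : ∀ a b : ℝ, IntervalIntegrable v volume a b :=
    ii_of_bdd hvsm.aestronglyMeasurable hvb
  set G : ℝ → Em m := fun r => ∫ s in Set.Ioc (0:ℝ) r, g s with hGdef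
  have hgiIcc : IntegrableOn g (Set.Icc 0 T) := by
    rw [integrableOn_Icc_iff_integrableOn_Ioc]; exact hgi
  have hGc : ContinuousOn G (Set.Icc 0 T) := intervalIntegral.continuousOn_primitive hgiIcc
  have hGsm : AEStronglyMeasurable G (volume.restrict (Set.Ioc 0 t)) :=
    (hGc.mono ((Set.Ioc_subset_Icc_self).trans (Set.Icc_subset_Icc le_rfl htT))).aestronglyMeasurable
      measurableSet_Ioc
  set Bg : ℝ := ∫ s in Set.Ioc (0:ℝ) T, ‖g s‖ with hBgdef
  have hGb : ∀ r, 0 ≤ r → r ≤ T → ‖G r‖ ≤ Bg := by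
    intro r h0 h1
    calc ‖G r‖ ≤ ∫ s in Set.Ioc (0:ℝ) r, ‖g s‖ := norm_integral_le_integral_norm _
      _ ≤ Bg := by
          refine setIntegral_mono_set hgi.norm (ae_of_all _ fun s => norm_nonneg _) ?_
          exact HasSubset.Subset.eventuallyLE (Set.Ioc_subset_Ioc le_rfl h1)
  -- Step 1: replace f by c + G
  have step1 : convF f θ = ∫ r in (0:ℝ)..t, (inner ℝ (c + G r) (v r) : ℝ) := by
    refine intervalIntegral.integral_congr_ae ?_
    have h1 := (ae_restrict_iff' measurableSet_Ioo).mp hfg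
    have hne : ∀ᵐ r : ℝ ∂volume, r ∉ ({T} : Set ℝ) :=
      measure_eq_zero_iff_ae_notMem.mp (measure_singleton T)
    filter_upwards [h1, hne] with r hr hrT hmem
    rw [Set.uIoc_of_le ht0] at hmem
    have hrIoo : r ∈ Set.Ioo (0:ℝ) T :=
      ⟨hmem.1, lt_of_le_of_ne (hmem.2.trans htT) (fun h => hrT (by simp [h]))⟩
    rw [hr hrIoo, intervalIntegral.integral_of_le hmem.1.le]
  -- integrabilities for the split
  have h2a : IntervalIntegrable (fun r => (inner ℝ c (v r) : ℝ)) volume 0 t := by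
    refine ii_of_bdd (((innerSL ℝ c).continuous.comp_stronglyMeasurable
      hvsm).aestronglyMeasurable) (C := ‖c‖ * C) (fun r => ?_) 0 t
    exact (norm_inner_le_norm _ _).trans
      (mul_le_mul_of_nonneg_left (hvb r) (norm_nonneg c))
  have h2b : IntervalIntegrable (fun r => (inner ℝ (G r) (v r) : ℝ)) volume 0 t := by
    rw [intervalIntegrable_iff_integrableOn_Ioc_of_le ht0]
    refine Integrable.mono' (g := fun _ => Bg * C)
      (integrableOn_const measure_Ioc_lt_top.ne)
      (hGsm.inner hvsm.aestronglyMeasurable.restrict) ?_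
    rw [ae_restrict_iff' measurableSet_Ioc]
    refine ae_of_all _ fun r hr => ?_
    exact (norm_inner_le_norm _ _).trans
      (mul_le_mul (hGb r hr.1.le (hr.2.trans htT)) (hvb r) (norm_nonneg _)
        ((norm_nonneg _).trans (hGb 0 le_rfl hT.le)))
  have step2 : ∫ r in (0:ℝ)..t, (inner ℝ (c + G r) (v r) : ℝ)
      = (∫ r in (0:ℝ)..t, (inner ℝ c (v r) : ℝ))
        + ∫ r in (0:ℝ)..t, (inner ℝ (G r) (v r) : ℝ) := by
    rw [← intervalIntegral.integral_add h2a h2b]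
    refine intervalIntegral.integral_congr fun r _ => ?_
    exact inner_add_left _ _ _
  -- Step 3: first summand
  have step3 : ∫ r in (0:ℝ)..t, (inner ℝ c (v r) : ℝ) = (inner ℝ c (Iv θ) : ℝ) := by
    have h := (innerSL ℝ c).intervalIntegral_comp_comm (hvii 0 t)
    have h2 : (∫ r in (0:ℝ)..t, v r) = Iv θ := by
      rw [hvdef]
      rw [intervalIntegral.integral_comp_sub_left (ev θ.2) t]
      simp [Iv, htdef]
    simpa [h2] using h
  rw [step1, step2, step3]
  congr 1
  -- Step 4: Fubini
  have hzero : ∫ s in Set.Ioc t T, (inner ℝ (g s) (Iv θ - Hv θ s) : ℝ) = 0 := by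
    rw [setIntegral_congr_fun (g := fun _ => (0:ℝ)) measurableSet_Ioc ?_, integral_zero]
    intro s hs
    have hmax : max (t - s) 0 = 0 := max_eq_right (by linarith [hs.1])
    have h7 : Hv θ s = Iv θ := by
      rw [show Hv θ s = ∫ r in (max (t - s) 0)..t, ev θ.2 r from rfl, hmax]; rfl
    simp [h7]
  have hsplit : ∫ s in Set.Ioc (0:ℝ) T, (inner ℝ (g s) (Iv θ - Hv θ s) : ℝ)
      = ∫ s in Set.Ioc (0:ℝ) t, (inner ℝ (g s) (Iv θ - Hv θ s) : ℝ) := by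
    rw [← Set.Ioc_union_Ioc_eq_Ioc ht0 htT,
      setIntegral_union (Set.Ioc_disjoint_Ioc_of_le le_rfl) measurableSet_Ioc
        (integrand_int hT.le hgi θ (Set.Ioc_subset_Ioc le_rfl htT))
        (integrand_int hT.le hgi θ (Set.Ioc_subset_Ioc ht0 le_rfl)),
      hzero, add_zero]
  rw [hsplit, intervalIntegral.integral_of_le ht0]
  set ψ : ℝ → ℝ → ℝ :=
    fun r s => Set.indicator (Set.Iic r) (fun s' => (inner ℝ (v r) (g s') : ℝ)) s with hψdef
  have huncurry : Function.uncurry ψ = Set.indicator {p : ℝ × ℝ | p.2 ≤ p.1}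
      (fun p => (inner ℝ (v p.1) (g p.2) : ℝ)) := by
    funext p
    simp only [hψdef, Function.uncurry, Set.indicator_apply, Set.mem_Iic, Set.mem_setOf_eq]
  have hψint : Integrable (Function.uncurry ψ)
      ((volume.restrict (Set.Ioc (0:ℝ) t)).prod (volume.restrict (Set.Ioc (0:ℝ) t))) := by
    rw [huncurry]
    have hsm : StronglyMeasurable (fun p : ℝ × ℝ => (inner ℝ (v p.1) (g p.2) : ℝ)) := by
      have h1 : StronglyMeasurable (fun p : ℝ × ℝ => (v p.1, g p.2)) :=
        (hvsm.comp_measurable measurable_fst).prodMk (hgm.comp_measurable measurable_snd)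
      exact (continuous_inner (𝕜 := ℝ) (E := Em m)).comp_stronglyMeasurable h1
    have hmeas : MeasurableSet {p : ℝ × ℝ | p.2 ≤ p.1} :=
      measurableSet_le measurable_snd measurable_fst
    refine Integrable.mono' (g := fun p => C * ‖g p.2‖) ?_
      ((hsm.indicator hmeas).aestronglyMeasurable) (ae_of_all _ fun p => ?_)
    · exact Integrable.mul_prod (integrableOn_const (C := C) measure_Ioc_lt_top.ne)
        ((hgi.mono_set (Set.Ioc_subset_Ioc le_rfl htT)).norm)
    · rw [Set.indicator_apply]
      split
      · exact (norm_inner_le_norm _ _).trans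
          (mul_le_mul_of_nonneg_right (hvb _) (norm_nonneg _))
      · simp only [norm_zero]
        positivity
  have hswap := MeasureTheory.integral_integral_swap hψint
  have hLHS : ∫ r in Set.Ioc (0:ℝ) t, (inner ℝ (G r) (v r) : ℝ)
      = ∫ r in Set.Ioc (0:ℝ) t, ∫ s in Set.Ioc (0:ℝ) t, ψ r s := by
    refine setIntegral_congr_fun measurableSet_Ioc fun r hr => ?_
    have hgr : IntegrableOn g (Set.Ioc 0 r) :=
      hgi.mono_set (Set.Ioc_subset_Ioc le_rfl (hr.2.trans htT))
    have h1 : (inner ℝ (G r) (v r) : ℝ) = ∫ s in Set.Ioc (0:ℝ) r, (inner ℝ (v r) (g s) : ℝ) := by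
      rw [real_inner_comm]
      exact ((innerSL ℝ (v r)).integral_comp_comm hgr).symm
    have h2 : ∫ s in Set.Ioc (0:ℝ) t, ψ r s = ∫ s in Set.Ioc (0:ℝ) r, (inner ℝ (v r) (g s) : ℝ) := by
      rw [hψdef]
      rw [setIntegral_indicator measurableSet_Iic, Set.Ioc_inter_Iic, min_eq_right hr.2]
    rw [h1, h2]
  have hRHS : ∫ s in Set.Ioc (0:ℝ) t, ∫ r in Set.Ioc (0:ℝ) t, ψ r s
      = ∫ s in Set.Ioc (0:ℝ) t, (inner ℝ (g s) (Iv θ - Hv θ s) : ℝ) := by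
    refine setIntegral_congr_fun measurableSet_Ioc fun s hs => ?_
    have h1 : (fun r => ψ r s) = Set.indicator (Set.Ici s) (fun r => (inner ℝ (v r) (g s) : ℝ)) := by
      funext r
      simp only [hψdef, Set.indicator_apply, Set.mem_Iic, Set.mem_Ici]
    rw [h1, setIntegral_indicator measurableSet_Ici]
    have h2 : Set.Ioc (0:ℝ) t ∩ Set.Ici s = Set.Icc s t := by
      ext r
      simp only [Set.mem_inter_iff, Set.mem_Ioc, Set.mem_Ici, Set.mem_Icc]
      constructor
      · rintro ⟨⟨_, hb2⟩, hb3⟩; exact ⟨hb3, hb2⟩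
      · rintro ⟨hb1, hb2⟩; exact ⟨⟨lt_of_lt_of_le hs.1 hb1, hb2⟩, hb1⟩
    rw [h2, integral_Icc_eq_integral_Ioc, ← intervalIntegral.integral_of_le hs.2]
    have h3 : (fun r => (inner ℝ (v r) (g s) : ℝ)) = fun r => (innerSL ℝ (g s)) (v r) := by
      funext r; exact real_inner_comm _ _
    rw [h3, (innerSL ℝ (g s)).intervalIntegral_comp_comm (hvii s t)]
    have h4 : (∫ r in s..t, v r) = Iv θ - Hv θ s := by
      have hmax : max (t - s) 0 = t - s := max_eq_left (by linarith [hs.2])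
      have h5 : (∫ r in s..t, v r) = ∫ x in (0:ℝ)..(t - s), ev θ.2 x := by
        rw [hvdef, intervalIntegral.integral_comp_sub_left (ev θ.2) t]
        norm_num
      have h6 : (∫ x in (0:ℝ)..(t-s), ev θ.2 x) + ∫ x in (t-s)..t, ev θ.2 x
          = ∫ x in (0:ℝ)..t, ev θ.2 x :=
        intervalIntegral.integral_add_adjacent_intervals (ev_ii hT.le θ.2 _ _)
          (ev_ii hT.le θ.2 _ _)
      have h7 : Hv θ s = ∫ x in (t-s)..t, ev θ.2 x := by
        rw [show Hv θ s = ∫ r in (max (t - s) 0)..t, ev θ.2 r from rfl, hmax]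
      have h8 : Iv θ = ∫ x in (0:ℝ)..t, ev θ.2 x := rfl
      rw [h5, h7, h8, ← h6]
      abel
    rw [h4]
    simp [real_inner_comm]
  rw [hLHS, hswap, hRHS]

end Stmt15Aux


namespace Stmt15Aux

variable {m : ℕ} {T : ℝ}

lemma dB_eq (θ₁ θ₂ : ThetaSp m T) : dBmetric θ₁ θ₂ =
    |(θ₁.1 : ℝ) - (θ₂.1 : ℝ)| + ‖ev θ₁.2 (θ₁.1 : ℝ) - ev θ₂.2 (θ₂.1 : ℝ)‖ +
      ‖Iv θ₁ - Iv θ₂‖ + Real.sqrt (∫ ρ in (0:ℝ)..T, ‖Hv θ₁ ρ - Hv θ₂ ρ‖ ^ 2) := rfl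

lemma norm_Iv_sub_le (θ₁ θ₂ : ThetaSp m T) : ‖Iv θ₁ - Iv θ₂‖ ≤ dBmetric θ₁ θ₂ := by
  rw [dB_eq]
  have h1 : 0 ≤ |(θ₁.1 : ℝ) - (θ₂.1 : ℝ)| := abs_nonneg _
  have h2 : 0 ≤ ‖ev θ₁.2 (θ₁.1 : ℝ) - ev θ₂.2 (θ₂.1 : ℝ)‖ := norm_nonneg _
  have h3 : 0 ≤ Real.sqrt (∫ ρ in (0:ℝ)..T, ‖Hv θ₁ ρ - Hv θ₂ ρ‖ ^ 2) := Real.sqrt_nonneg _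
  linarith

lemma sqrt_Hv_sub_le (θ₁ θ₂ : ThetaSp m T) :
    Real.sqrt (∫ ρ in (0:ℝ)..T, ‖Hv θ₁ ρ - Hv θ₂ ρ‖ ^ 2) ≤ dBmetric θ₁ θ₂ := by
  rw [dB_eq]
  have h1 : 0 ≤ |(θ₁.1 : ℝ) - (θ₂.1 : ℝ)| := abs_nonneg _
  have h2 : 0 ≤ ‖ev θ₁.2 (θ₁.1 : ℝ) - ev θ₂.2 (θ₂.1 : ℝ)‖ := norm_nonneg _
  have h3 : 0 ≤ ‖Iv θ₁ - Iv θ₂‖ := norm_nonneg _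
  linarith

end Stmt15Aux


open Stmt15Aux

/-- STATEMENT 15: if `f ∈ W^{1,2}((0,T),ℝ^m)` (i.e. `f(t) = c + ∫_0^t g(s) ds` a.e. with
`g ∈ L²`), then the convolution functional `F(t,ω) = ∫_0^t ⟨f(r), ω(t−r)⟩ dr` is
`d_B`-continuous. -/
theorem stmt15 (m : ℕ) (hm : 1 ≤ m) (T : ℝ) (hT : 0 < T)
    (f : ℝ → Em m) (hf : MemLp f 2 (volume.restrict (Set.Ioo (0:ℝ) T)))
    (c : Em m) (g : ℝ → Em m)
    (hg : MemLp g 2 (volume.restrict (Set.Ioo (0:ℝ) T)))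
    (hfg : ∀ᵐ t ∂(volume.restrict (Set.Ioo (0:ℝ) T)), f t = c + ∫ s in (0:ℝ)..t, g s) :
    ∀ (θn : ℕ → ThetaSp m T) (θ : ThetaSp m T),
      Tendsto (fun n => dBmetric (θn n) θ) atTop (nhds 0) →
      Tendsto (fun n => convF f (θn n)) atTop (nhds (convF f θ)) := by

  intro θn θ hθ
  have hres : volume.restrict (Set.Ioo (0:ℝ) T) = volume.restrict (Set.Ioc (0:ℝ) T) :=
    Measure.restrict_congr_set Ioo_ae_eq_Ioc
  haveI : IsFiniteMeasure (volume.restrict (Set.Ioo (0:ℝ) T)) :=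
    ⟨by rw [Measure.restrict_apply_univ]; exact measure_Ioo_lt_top⟩
  haveI : IsFiniteMeasure (volume.restrict (Set.Ioc (0:ℝ) T)) :=
    ⟨by rw [Measure.restrict_apply_univ]; exact measure_Ioc_lt_top⟩
  set g₁ : ℝ → Em m := hg.1.mk g with hg₁def
  have hg₁sm : StronglyMeasurable g₁ := hg.1.stronglyMeasurable_mk
  have hgg₁ : g =ᵐ[volume.restrict (Set.Ioo (0:ℝ) T)] g₁ := hg.1.ae_eq_mk
  have hg₁L2 : MemLp g₁ 2 (volume.restrict (Set.Ioo (0:ℝ) T)) := hg.ae_eq hgg₁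
  have hg₁L2' : MemLp g₁ 2 (volume.restrict (Set.Ioc (0:ℝ) T)) := by rw [← hres]; exact hg₁L2
  have hg₁i : IntegrableOn g₁ (Set.Ioc (0:ℝ) T) := by
    rw [IntegrableOn, ← hres]; exact hg₁L2.integrable (by norm_num)
  have hfg₁ : ∀ᵐ t ∂(volume.restrict (Set.Ioo (0:ℝ) T)), f t = c + ∫ s in (0:ℝ)..t, g₁ s := by
    have hint : ∀ t ∈ Set.Ioo (0:ℝ) T, (∫ s in (0:ℝ)..t, g s) = ∫ s in (0:ℝ)..t, g₁ s := by
      intro t ht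
      rw [intervalIntegral.integral_of_le ht.1.le, intervalIntegral.integral_of_le ht.1.le]
      refine integral_congr_ae ?_
      have h1 : g =ᵐ[volume.restrict (Set.Ioc (0:ℝ) T)] g₁ := by rw [← hres]; exact hgg₁
      exact ae_restrict_of_ae_restrict_of_subset (Set.Ioc_subset_Ioc le_rfl ht.2.le) h1
    filter_upwards [hfg, ae_restrict_mem measurableSet_Ioo] with t h1 h2
    rw [h1, hint t h2]
  have hrep : ∀ ϑ : ThetaSp m T, convF f ϑ = (inner ℝ c (Iv ϑ) : ℝ) +
      ∫ s in Set.Ioc (0:ℝ) T, (inner ℝ (g₁ s) (Iv ϑ - Hv ϑ s) : ℝ) :=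
    rep hT f c g₁ hg₁sm hg₁i hfg₁
  set Bg1 : ℝ := ∫ s in Set.Ioc (0:ℝ) T, ‖g₁ s‖ with hBg1
  set Bg2 : ℝ := Real.sqrt (∫ s in Set.Ioc (0:ℝ) T, ‖g₁ s‖ ^ 2) with hBg2
  have hBg1nn : 0 ≤ Bg1 := setIntegral_nonneg measurableSet_Ioc fun s _ => norm_nonneg _
  have hBg2nn : 0 ≤ Bg2 := Real.sqrt_nonneg _
  have key : ∀ n, ‖convF f (θn n) - convF f θ‖ ≤ (‖c‖ + Bg1 + Bg2) * dBmetric (θn n) θ := by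
    intro n
    set d : ℝ := dBmetric (θn n) θ with hd
    have hdnn : 0 ≤ d := le_trans (norm_nonneg _) (norm_Iv_sub_le (θn n) θ)
    set ΔI : Em m := Iv (θn n) - Iv θ with hΔI
    set ΔH : ℝ → Em m := fun s => Hv (θn n) s - Hv θ s with hΔH
    have hd1 : ‖ΔI‖ ≤ d := norm_Iv_sub_le (θn n) θ
    have hΔHc : Continuous ΔH := (Hv_continuous hT.le (θn n)).sub (Hv_continuous hT.le θ)
    set MH : ℝ := ‖(θn n).2.val‖ * T + ‖θ.2.val‖ * T with hMH
    have hMHnn : 0 ≤ MH := by positivity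
    have hΔHb : ∀ s ∈ Set.Ioc (0:ℝ) T, ‖ΔH s‖ ≤ MH := fun s hs =>
      (norm_sub_le _ _).trans
        (add_le_add (Hv_norm_le hT.le (θn n) hs.1.le) (Hv_norm_le hT.le θ hs.1.le))
    have hint1 : IntegrableOn (fun s => (inner ℝ (g₁ s) (Iv (θn n) - Hv (θn n) s) : ℝ))
        (Set.Ioc (0:ℝ) T) := integrand_int hT.le hg₁i (θn n) le_rfl
    have hint2 : IntegrableOn (fun s => (inner ℝ (g₁ s) (Iv θ - Hv θ s) : ℝ))
        (Set.Ioc (0:ℝ) T) := integrand_int hT.le hg₁i θ le_rfl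
    have hdiff : convF f (θn n) - convF f θ
        = (inner ℝ c ΔI : ℝ) + ∫ s in Set.Ioc (0:ℝ) T, (inner ℝ (g₁ s) (ΔI - ΔH s) : ℝ) := by
      have e1 : (inner ℝ c (Iv (θn n)) : ℝ) - inner ℝ c (Iv θ) = inner ℝ c ΔI :=
        (inner_sub_right _ _ _).symm
      have e2 : (∫ s in Set.Ioc (0:ℝ) T, (inner ℝ (g₁ s) (Iv (θn n) - Hv (θn n) s) : ℝ))
          - ∫ s in Set.Ioc (0:ℝ) T, (inner ℝ (g₁ s) (Iv θ - Hv θ s) : ℝ)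
          = ∫ s in Set.Ioc (0:ℝ) T, (inner ℝ (g₁ s) (ΔI - ΔH s) : ℝ) := by
        rw [← integral_sub hint1 hint2]
        refine integral_congr_ae (ae_of_all _ fun s => ?_)
        show (inner ℝ (g₁ s) (Iv (θn n) - Hv (θn n) s) : ℝ) - inner ℝ (g₁ s) (Iv θ - Hv θ s)
            = inner ℝ (g₁ s) (ΔI - ΔH s)
        rw [← inner_sub_right]
        congr 1
        simp only [hΔI, hΔH]
        abel
      rw [hrep (θn n), hrep θ, ← e1, ← e2]
      ring
    -- integrability of auxiliary products
    have hXc : Continuous (fun s => ΔI - ΔH s) := continuous_const.sub hΔHc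
    have hXb : ∀ s ∈ Set.Ioc (0:ℝ) T, ‖ΔI - ΔH s‖ ≤ ‖ΔI‖ + MH := fun s hs =>
      (norm_sub_le _ _).trans (add_le_add le_rfl (hΔHb s hs))
    have hI2 : Integrable (fun s => ‖g₁ s‖ * ‖ΔH s‖) (volume.restrict (Set.Ioc (0:ℝ) T)) := by
      refine Integrable.mono' (g := fun s => ‖g₁ s‖ * MH) (hg₁i.norm.mul_const _)
        (hg₁i.norm.aestronglyMeasurable.mul
          (hΔHc.norm.aestronglyMeasurable.restrict)) ?_
      rw [ae_restrict_iff' measurableSet_Ioc]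
      refine ae_of_all _ fun s hs => ?_
      rw [Real.norm_eq_abs, abs_of_nonneg (by positivity)]
      exact mul_le_mul_of_nonneg_left (hΔHb s hs) (norm_nonneg _)
    have hI1 : Integrable (fun s => ‖g₁ s‖ * ‖ΔI - ΔH s‖)
        (volume.restrict (Set.Ioc (0:ℝ) T)) := by
      refine Integrable.mono' (g := fun s => ‖g₁ s‖ * (‖ΔI‖ + MH)) (hg₁i.norm.mul_const _)
        (hg₁i.norm.aestronglyMeasurable.mul
          (hXc.norm.aestronglyMeasurable.restrict)) ?_
      rw [ae_restrict_iff' measurableSet_Ioc]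
      refine ae_of_all _ fun s hs => ?_
      rw [Real.norm_eq_abs, abs_of_nonneg (by positivity)]
      exact mul_le_mul_of_nonneg_left (hXb s hs) (norm_nonneg _)
    -- Hölder step
    have hpq : Real.HolderConjugate 2 2 := Real.HolderConjugate.two_two
    have h2e : ENNReal.ofReal (2:ℝ) = 2 := by norm_num
    have hMf : MemLp (fun s => ‖g₁ s‖) (ENNReal.ofReal (2:ℝ))
        (volume.restrict (Set.Ioc (0:ℝ) T)) := by rw [h2e]; exact hg₁L2'.norm
    have hMg : MemLp (fun s => ‖ΔH s‖) (ENNReal.ofReal (2:ℝ))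
        (volume.restrict (Set.Ioc (0:ℝ) T)) := by
      rw [h2e]
      exact MemLp.of_bound (hΔHc.norm.aestronglyMeasurable.restrict) MH
        ((ae_restrict_iff' measurableSet_Ioc).mpr (ae_of_all _ fun s hs => by
          rw [Real.norm_eq_abs, abs_of_nonneg (norm_nonneg _)]; exact hΔHb s hs))
    have hrpow : ∀ x : ℝ, 0 ≤ x → x ^ (2:ℝ) = x ^ 2 := fun x hx => by
      rw [show (2:ℝ) = ((2:ℕ) : ℝ) by norm_num, Real.rpow_natCast]
    have hholder : (∫ s in Set.Ioc (0:ℝ) T, ‖g₁ s‖ * ‖ΔH s‖)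
        ≤ Bg2 * Real.sqrt (∫ s in Set.Ioc (0:ℝ) T, ‖ΔH s‖ ^ 2) := by
      have h := integral_mul_le_Lp_mul_Lq_of_nonneg hpq
        (ae_of_all _ fun s => norm_nonneg (g₁ s)) (ae_of_all _ fun s => norm_nonneg (ΔH s))
        hMf hMg
      have e1 : (∫ s in Set.Ioc (0:ℝ) T, ‖g₁ s‖ ^ (2:ℝ))
          = ∫ s in Set.Ioc (0:ℝ) T, ‖g₁ s‖ ^ 2 :=
        integral_congr_ae (ae_of_all _ fun s => hrpow _ (norm_nonneg _))
      have e2 : (∫ s in Set.Ioc (0:ℝ) T, ‖ΔH s‖ ^ (2:ℝ))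
          = ∫ s in Set.Ioc (0:ℝ) T, ‖ΔH s‖ ^ 2 :=
        integral_congr_ae (ae_of_all _ fun s => hrpow _ (norm_nonneg _))
      rw [e1, e2] at h
      rw [hBg2, Real.sqrt_eq_rpow, Real.sqrt_eq_rpow]
      exact h
    have hsqrtle : Real.sqrt (∫ s in Set.Ioc (0:ℝ) T, ‖ΔH s‖ ^ 2) ≤ d := by
      have := sqrt_Hv_sub_le (θn n) θ
      rwa [intervalIntegral.integral_of_le hT.le] at this
    -- assemble
    rw [hdiff]
    have hb1 : ‖(inner ℝ c ΔI : ℝ)‖ ≤ ‖c‖ * d :=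
      (norm_inner_le_norm _ _).trans (mul_le_mul_of_nonneg_left hd1 (norm_nonneg c))
    have hb2 : ‖∫ s in Set.Ioc (0:ℝ) T, (inner ℝ (g₁ s) (ΔI - ΔH s) : ℝ)‖
        ≤ Bg1 * d + Bg2 * d := by
      calc ‖∫ s in Set.Ioc (0:ℝ) T, (inner ℝ (g₁ s) (ΔI - ΔH s) : ℝ)‖
          ≤ ∫ s in Set.Ioc (0:ℝ) T, ‖(inner ℝ (g₁ s) (ΔI - ΔH s) : ℝ)‖ :=
            norm_integral_le_integral_norm _
        _ ≤ ∫ s in Set.Ioc (0:ℝ) T, ‖g₁ s‖ * ‖ΔI - ΔH s‖ :=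
            integral_mono_of_nonneg (ae_of_all _ fun s => norm_nonneg _) hI1
              (ae_of_all _ fun s => norm_inner_le_norm _ _)
        _ ≤ ∫ s in Set.Ioc (0:ℝ) T, (‖g₁ s‖ * ‖ΔI‖ + ‖g₁ s‖ * ‖ΔH s‖) := by
            refine integral_mono_of_nonneg
              (ae_of_all _ fun s => by positivity)
              ((hg₁i.norm.mul_const _).add hI2)
              (ae_of_all _ fun s => ?_)
            show ‖g₁ s‖ * ‖ΔI - ΔH s‖ ≤ ‖g₁ s‖ * ‖ΔI‖ + ‖g₁ s‖ * ‖ΔH s‖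
            rw [← mul_add]
            exact mul_le_mul_of_nonneg_left (norm_sub_le _ _) (norm_nonneg _)
        _ = (∫ s in Set.Ioc (0:ℝ) T, ‖g₁ s‖) * ‖ΔI‖
              + ∫ s in Set.Ioc (0:ℝ) T, ‖g₁ s‖ * ‖ΔH s‖ := by
            rw [integral_add (hg₁i.norm.mul_const _) hI2, integral_mul_const]
        _ ≤ Bg1 * d + Bg2 * d := by
            refine add_le_add ?_ (hholder.trans
              (mul_le_mul_of_nonneg_left hsqrtle hBg2nn))
            exact mul_le_mul_of_nonneg_left hd1 hBg1nn
    calc ‖(inner ℝ c ΔI : ℝ) + ∫ s in Set.Ioc (0:ℝ) T, (inner ℝ (g₁ s) (ΔI - ΔH s) : ℝ)‖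
        ≤ ‖(inner ℝ c ΔI : ℝ)‖ + ‖∫ s in Set.Ioc (0:ℝ) T, (inner ℝ (g₁ s) (ΔI - ΔH s) : ℝ)‖ :=
          norm_add_le _ _
      _ ≤ ‖c‖ * d + (Bg1 * d + Bg2 * d) := add_le_add hb1 hb2
      _ = (‖c‖ + Bg1 + Bg2) * d := by ring
  have hlim : Tendsto (fun n => (‖c‖ + Bg1 + Bg2) * dBmetric (θn n) θ) atTop (nhds 0) := by
    simpa using hθ.const_mul (‖c‖ + Bg1 + Bg2)
  exact tendsto_sub_nhds_zero_iff.mp (squeeze_zero_norm key hlim)
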